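/- Let S ⊆ ℚ be a finite nonempty set and let r ∈ ℚ with r ∉ {−1, 0, 1}. Consider the alphabet X = S × S. Then the language L over X consisting of all words [(a₀,b₀)(a₁,b₁)⋯(a_{n}, b_{n})] (for n ≥ 0, including the empty word) such that the two component digit strings have equal value in base r — that is, ∑_{i=0}^{n} a_i r^{n−i} = ∑_{i=0}^{n} b_i r^{n−i} — is a regular language (accepted by some finite automaton). -/

import Mathlib

/-- The value of a digit word (most significant digit first) with respect to the base `r`:
`val_r(w_{n-1} ⋯ w_1 w_0) = ∑_{i=0}^{n-1} w_i r^i`, computed by Horner's rule. -/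
def valBase (r : ℚ) (w : List ℚ) : ℚ :=
  w.foldl (fun acc d => acc * r + d) 0

section Aux

variable (r : ℚ)

lemma valBase_append_singleton (w : List ℚ) (x : ℚ) :
    valBase r (w ++ [x]) = valBase r w * r + x := by
  simp [valBase, List.foldl_append]

lemma valBase_foldl (v : List ℚ) : ∀ a : ℚ,
    v.foldl (fun acc d => acc * r + d) a = a * r ^ v.length + valBase r v := by
  induction v with
  | nil => intro a; simp [valBase]
  | cons x v ih =>
    intro a
    have h1 := ih (a * r + x)
    have h2 := ih x
    simp only [List.foldl_cons, List.length_cons]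
    rw [h1]
    have h3 : valBase r (x :: v) = x * r ^ v.length + valBase r v := by
      simpa [valBase] using h2
    rw [h3]
    ring

lemma valBase_append (u v : List ℚ) :
    valBase r (u ++ v) = valBase r u * r ^ v.length + valBase r v := by
  rw [valBase, List.foldl_append, ← valBase, valBase_foldl]

lemma valBase_map_sub {α : Type*} (f g : α → ℚ) (w : List α) :
    valBase r (w.map fun x => f x - g x) =
      valBase r (w.map f) - valBase r (w.map g) := by
  induction w using List.reverseRecOn with
  | nil => simp [valBase]
  | append_singleton u x ih =>
    simp only [List.map_append, List.map_cons, List.map_nil,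
      valBase_append_singleton, ih]
    ring

/-- denominator control: if every digit times `D` is an integer, then the value times
`D * den(r)^len` is an integer. -/
lemma valBase_den (D : ℕ) (w : List ℚ) (hw : ∀ x ∈ w, ∃ k : ℤ, x * D = k) :
    ∃ A : ℤ, valBase r w * D * (r.den : ℚ) ^ w.length = A := by
  have hden0 : ((r.den : ℚ)) ≠ 0 := by
    exact_mod_cast r.den_nz
  have hrq : r * (r.den : ℚ) = (r.num : ℚ) := by
    nth_rewrite 1 [← Rat.num_div_den r]
    exact div_mul_cancel₀ _ hden0
  induction w using List.reverseRecOn with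
  | nil => exact ⟨0, by simp [valBase]⟩
  | append_singleton u x ih =>
    obtain ⟨A, hA⟩ := ih fun y hy => hw y (by simp [hy])
    obtain ⟨k, hk⟩ := hw x (by simp)
    refine ⟨A * r.num + k * (r.den : ℤ) ^ (u.length + 1), ?_⟩
    have heq : valBase r (u ++ [x]) * D * (r.den : ℚ) ^ (u ++ [x]).length
        = (valBase r u * D * (r.den : ℚ) ^ u.length) * (r * r.den)
          + (x * D) * ((r.den : ℚ) ^ u.length * r.den) := by
      rw [valBase_append_singleton]
      simp only [List.length_append, List.length_cons, List.length_nil]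
      ring
    rw [heq, hA, hk, hrq]
    push_cast
    ring

lemma valBase_abs_le (M : ℚ) (hM : 0 ≤ M) (w : List ℚ) (hw : ∀ x ∈ w, |x| ≤ M) :
    |valBase r w| ≤ M * ∑ i ∈ Finset.range w.length, |r| ^ i := by
  induction w using List.reverseRecOn with
  | nil => simp [valBase]
  | append_singleton u x ih =>
    have h1 := ih fun y hy => hw y (by simp [hy])
    have h2 := hw x (by simp)
    rw [valBase_append_singleton]
    calc |valBase r u * r + x| ≤ |valBase r u| * |r| + |x| := by
          refine (abs_add_le _ _).trans ?_
          rw [abs_mul]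
      _ ≤ (M * ∑ i ∈ Finset.range u.length, |r| ^ i) * |r| + M := by
          gcongr
      _ = M * ∑ i ∈ Finset.range (u ++ [x]).length, |r| ^ i := by
          have hlen : (u ++ [x]).length = u.length + 1 := by simp
          rw [hlen, geom_sum_succ]
          ring

/-- the key bound: if the whole word evaluates to `0`, every prefix value is bounded. -/
lemma valBase_prefix_bound (hr0 : r ≠ 0) (hr1 : |r| ≠ 1) (M : ℚ) (hM : 0 ≤ M)
    (u v : List ℚ) (h : valBase r (u ++ v) = 0) (hd : ∀ x ∈ u ++ v, |x| ≤ M) :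
    |valBase r u| ≤ M / |(|r| - 1)| := by
  have hrpos : 0 < |r| := abs_pos.mpr hr0
  have hu : |valBase r u| ≤ M * ∑ i ∈ Finset.range u.length, |r| ^ i :=
    valBase_abs_le r M hM u fun x hx => hd x (by simp [hx])
  have hv : |valBase r v| ≤ M * ∑ i ∈ Finset.range v.length, |r| ^ i :=
    valBase_abs_le r M hM v fun x hx => hd x (by simp [hx])
  rcases lt_or_gt_of_ne hr1 with hlt | hgt
  · -- |r| < 1 : use the prefix estimate directly
    have habs : |(|r| - 1)| = 1 - |r| := by
      rw [abs_of_nonpos (by linarith)]; ring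
    have hsum : ∑ i ∈ Finset.range u.length, |r| ^ i ≤ 1 / (1 - |r|) := by
      have hpw : 0 ≤ |r| ^ u.length := by positivity
      have heq2 : (|r| ^ u.length - 1) / (|r| - 1) = (1 - |r| ^ u.length) / (1 - |r|) := by
        rw [← neg_div_neg_eq]
        ring_nf
      rw [geom_sum_eq hr1, heq2, div_le_div_iff₀ (by linarith) (by linarith)]
      nlinarith
    calc |valBase r u| ≤ M * (1 / (1 - |r|)) := hu.trans (by gcongr)
      _ = M / |(|r| - 1)| := by rw [habs]; ring
  · -- |r| > 1 : use the suffix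
    have habs : |(|r| - 1)| = |r| - 1 := abs_of_pos (by linarith)
    have hpow : (0:ℚ) < |r| ^ v.length := by positivity
    have key : |valBase r u| * |r| ^ v.length = |valBase r v| := by
      have hneg : valBase r u * r ^ v.length = -valBase r v := by
        have hh := valBase_append r u v
        rw [h] at hh
        linarith
      calc |valBase r u| * |r| ^ v.length = |valBase r u * r ^ v.length| := by
            rw [abs_mul, abs_pow]
        _ = |valBase r v| := by rw [hneg, abs_neg]
    have hsum : M * ∑ i ∈ Finset.range v.length, |r| ^ i
        ≤ M / (|r| - 1) * |r| ^ v.length := by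
      rw [geom_sum_eq hr1, ← mul_div_assoc, div_mul_eq_mul_div]
      gcongr
      · linarith
    have hfin : |valBase r u| * |r| ^ v.length ≤ M / (|r| - 1) * |r| ^ v.length := by
      rw [key]; exact hv.trans hsum
    rw [habs]
    exact le_of_mul_le_mul_right hfin hpow

lemma den_dvd_of_mul_intCast (k : ℚ) (c A : ℤ) (hc : (c : ℚ) ≠ 0)
    (h : k * (c : ℚ) = (A : ℚ)) : (k.den : ℤ) ∣ c := by
  have hk : k = (A : ℚ) / (c : ℚ) := by rw [eq_div_iff hc]; exact h
  rw [hk, ← Rat.divInt_eq_div]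
  exact Rat.den_dvd A c

end Aux

section TheDFA

variable (S : Finset ℚ) (r : ℚ) (D N : ℕ)

/-- the state space: `none` is a dead state; `some n` records that the current
prefix diff-value times `D` equals the integer `n`. -/
abbrev EqState (N : ℕ) := Option {n : ℤ // n ∈ Finset.Icc (-(N : ℤ)) (N : ℤ)}

lemma zero_mem_Icc (N : ℕ) : (0 : ℤ) ∈ Finset.Icc (-(N : ℤ)) (N : ℤ) := by
  simp

/-- the automaton accepting words whose two digit strings have equal value. -/
noncomputable def eqDFA : DFA (↥S × ↥S) (EqState N) where
  step s x := s.bind fun n =>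
    let k : ℚ := ((n.1 : ℚ) / D * r + ((x.1 : ℚ) - (x.2 : ℚ))) * D
    if h : k.den = 1 ∧ k.num ∈ Finset.Icc (-(N : ℤ)) (N : ℤ) then
      some ⟨k.num, h.2⟩ else none
  start := some ⟨0, zero_mem_Icc N⟩
  accept := {some ⟨0, zero_mem_Icc N⟩}

/-- the diff-value of a word. -/
def dval (w : List (↥S × ↥S)) : ℚ :=
  valBase r (w.map fun x => (x.1 : ℚ) - (x.2 : ℚ))

lemma dval_append_singleton (w : List (↥S × ↥S)) (x : ↥S × ↥S) :
    dval S r (w ++ [x]) = dval S r w * r + ((x.1 : ℚ) - (x.2 : ℚ)) := by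
  unfold dval
  rw [List.map_append]
  exact valBase_append_singleton r _ _

/-- forward correctness: a live state records the value of the prefix. -/
lemma eqDFA_eval_eq (hD : (D : ℚ) ≠ 0) (w : List (↥S × ↥S))
    (n : ℤ) (hn : n ∈ Finset.Icc (-(N : ℤ)) (N : ℤ))
    (h : (eqDFA S r D N).eval w = some ⟨n, hn⟩) : (n : ℚ) = dval S r w * D := by
  induction w using List.reverseRecOn generalizing n hn with
  | nil =>
    have h' : (some ⟨0, zero_mem_Icc N⟩ : EqState N) = some ⟨n, hn⟩ := h
    simp only [Option.some.injEq, Subtype.mk.injEq] at h'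
    simp [← h', dval, valBase]
  | append_singleton u x ih =>
    rw [DFA.eval, DFA.evalFrom_append_singleton, ← DFA.eval] at h
    rcases heval : (eqDFA S r D N).eval u with _ | m
    · rw [heval] at h
      simp [eqDFA] at h
    · rw [heval] at h
      obtain ⟨m, hm⟩ := m
      have hmval : (m : ℚ) = dval S r u * D := ih m hm heval
      simp only [eqDFA, Option.bind_some] at h
      split at h
      · next hcond =>
        simp only [Option.some.injEq, Subtype.mk.injEq] at h
        have hkval : ((m : ℚ) / D * r + ((x.1 : ℚ) - (x.2 : ℚ))) * D
            = dval S r (u ++ [x]) * D := by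
          rw [hmval, dval_append_singleton]
          field_simp
        rw [← h, Rat.coe_int_num_of_den_eq_one hcond.1, hkval]
      · exact absurd h (by simp)

end TheDFA

set_option maxHeartbeats 1000000 in
/-- for a finite nonempty set `S ⊆ ℚ` and a base `r ∉ {-1, 0, 1}`, the
language over the alphabet `S × S` of all words whose two component digit strings have
equal value in base `r` is regular. -/
theorem equal_value_language_regular (S : Finset ℚ) (hS : S.Nonempty) (r : ℚ)
    (hr : r ≠ -1 ∧ r ≠ 0 ∧ r ≠ 1) :
    Language.IsRegular
      ({w : List (↥S × ↥S) |
          valBase r (w.map fun x => (x.1 : ℚ)) = valBase r (w.map fun x => (x.2 : ℚ))} :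
        Language (↥S × ↥S)) := by
  obtain ⟨hrm1, hr0, hr1⟩ := hr
  have hrabs : |r| ≠ 1 := by
    intro h
    rcases (abs_eq (by norm_num : (0:ℚ) ≤ 1)).mp h with h' | h' <;> tauto
  have hrden : ((r.den : ℚ)) ≠ 0 := by exact_mod_cast r.den_nz
  have hrnum : (r.num : ℚ) ≠ 0 := by
    exact_mod_cast Rat.num_ne_zero.mpr hr0
  have hrq : r * (r.den : ℚ) = (r.num : ℚ) := by
    nth_rewrite 1 [← Rat.num_div_den r]
    exact div_mul_cancel₀ _ hrden
  -- common denominator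
  set D : ℕ := ∏ s ∈ S, s.den with hDdef
  have hDpos : 0 < D := Finset.prod_pos fun s _ => s.pos
  have hDQ : ((D : ℚ)) ≠ 0 := by positivity
  have hSD : ∀ s ∈ S, ∃ k : ℤ, (s : ℚ) * D = k := by
    intro s hs
    obtain ⟨c, hc⟩ := Finset.dvd_prod_of_mem (fun s : ℚ => s.den) hs
    refine ⟨s.num * c, ?_⟩
    have hden : ((s.den : ℚ)) ≠ 0 := by
      exact_mod_cast s.den_nz
    rw [hDdef, hc]
    push_cast
    nth_rewrite 1 [← Rat.num_div_den s]
    field_simp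
  -- digit bound
  set Mx : ℚ := (S.image fun s => |s|).max' (hS.image _) with hMxdef
  have hMx : ∀ s ∈ S, |s| ≤ Mx := fun s hs =>
    Finset.le_max' _ _ (Finset.mem_image_of_mem _ hs)
  have hMx0 : 0 ≤ Mx := (abs_nonneg _).trans (hMx _ hS.choose_spec)
  set M : ℚ := 2 * Mx with hMdef
  have hM0 : 0 ≤ M := by rw [hMdef]; linarith
  have hdig : ∀ x : ↥S × ↥S, |(x.1 : ℚ) - (x.2 : ℚ)| ≤ M := by
    intro x
    have h1 := hMx _ x.1.2
    have h2 := hMx _ x.2.2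
    calc |(x.1 : ℚ) - (x.2 : ℚ)| ≤ |(x.1 : ℚ)| + |(x.2 : ℚ)| := abs_sub _ _
      _ ≤ M := by rw [hMdef]; linarith
  have hdigD : ∀ x : ↥S × ↥S, ∃ k : ℤ, ((x.1 : ℚ) - (x.2 : ℚ)) * D = k := by
    intro x
    obtain ⟨k1, hk1⟩ := hSD _ x.1.2
    obtain ⟨k2, hk2⟩ := hSD _ x.2.2
    exact ⟨k1 - k2, by push_cast; rw [sub_mul, hk1, hk2]⟩
  have hdigD' : ∀ (w : List (↥S × ↥S)) (y : ℚ),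
      y ∈ w.map (fun x => (x.1 : ℚ) - (x.2 : ℚ)) → ∃ k : ℤ, y * D = k := by
    intro w y hy
    simp only [List.mem_map] at hy
    obtain ⟨z, _, rfl⟩ := hy
    exact hdigD z
  -- the bound on states
  set B : ℚ := M / |(|r| - 1)| with hBdef
  have hrabs0 : |r| - 1 ≠ 0 := sub_ne_zero.mpr hrabs
  have hB0 : 0 ≤ B := by
    rw [hBdef]
    positivity
  set N : ℕ := ⌈B * D⌉₊ with hNdef
  have hBN : B * D ≤ (N : ℚ) := Nat.le_ceil _
  -- backward correctness: if the total diff-value is 0, the run stays alive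
  have hG : ∀ u v : List (↥S × ↥S), dval S r (u ++ v) = 0 →
      ∃ n hn, (eqDFA S r D N).eval u = some ⟨n, hn⟩ := by
    intro u
    induction u using List.reverseRecOn with
    | nil => exact fun v _ => ⟨0, zero_mem_Icc N, rfl⟩
    | append_singleton u x ih =>
      intro v h0
      have hassoc : u ++ [x] ++ v = u ++ ([x] ++ v) := by simp
      obtain ⟨n, hn, heval⟩ := ih ([x] ++ v) (by rw [← hassoc]; exact h0)
      have hnval : (n : ℚ) = dval S r u * D :=
        eqDFA_eval_eq S r D N hDQ u n hn heval
      set δ : ℚ := dval S r (u ++ [x]) with hδ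
      set k : ℚ := δ * D with hkdef
      -- the split relation
      have hsplit : δ * r ^ v.length + dval S r v = 0 := by
        have hva := valBase_append r ((u ++ [x]).map fun x => (x.1 : ℚ) - (x.2 : ℚ))
          (v.map fun x => (x.1 : ℚ) - (x.2 : ℚ))
        rw [← List.map_append, List.length_map] at hva
        have h0' : dval S r (u ++ [x] ++ v) = 0 := h0
        rw [dval, hva] at h0'
        rw [hδ, dval, dval]
        exact h0'
      -- claim 1: k is an integer
      obtain ⟨A, hA⟩ := valBase_den r D ((u ++ [x]).map fun x => (x.1 : ℚ) - (x.2 : ℚ))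
        (hdigD' _)
      obtain ⟨A2, hA2⟩ := valBase_den r D (v.map fun x => (x.1 : ℚ) - (x.2 : ℚ))
        (hdigD' _)
      rw [List.length_map] at hA hA2
      have hq1 : k * (r.den : ℚ) ^ (u ++ [x]).length = (A : ℚ) := by
        rw [hkdef, hδ, dval]
        exact hA
      have hp1 : k * (r.num : ℚ) ^ v.length = ((-A2 : ℤ) : ℚ) := by
        have hpows : (r.num : ℚ) ^ v.length = r ^ v.length * (r.den : ℚ) ^ v.length := by
          rw [← hrq, mul_pow]
        have hδr : δ * r ^ v.length = -dval S r v := by linarith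
        calc k * (r.num : ℚ) ^ v.length
            = (δ * r ^ v.length) * D * (r.den : ℚ) ^ v.length := by
              rw [hkdef, hpows]; ring
          _ = -(dval S r v * D * (r.den : ℚ) ^ v.length) := by rw [hδr]; ring
          _ = ((-A2 : ℤ) : ℚ) := by rw [dval, hA2]; push_cast; ring
      have hden1 : k.den = 1 := by
        have hd1 : (k.den : ℤ) ∣ (r.den : ℤ) ^ (u ++ [x]).length := by
          refine den_dvd_of_mul_intCast k ((r.den : ℤ) ^ (u ++ [x]).length) A ?_ ?_
          · push_cast; positivity
          · push_cast; exact hq1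
        have hd2 : (k.den : ℤ) ∣ r.num ^ v.length := by
          refine den_dvd_of_mul_intCast k (r.num ^ v.length) (-A2) ?_ ?_
          · push_cast; exact pow_ne_zero _ hrnum
          · push_cast at hp1 ⊢; exact hp1
        have hn1 : k.den ∣ r.den ^ (u ++ [x]).length := by
          have : ((r.den : ℤ)) ^ (u ++ [x]).length = ((r.den ^ (u ++ [x]).length : ℕ) : ℤ) := by
            push_cast; ring
          rw [this] at hd1
          exact_mod_cast hd1
        have hn2 : k.den ∣ r.num.natAbs ^ v.length := by
          have h' : (k.den : ℤ) ∣ ((r.num ^ v.length).natAbs : ℤ) :=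
            Int.dvd_natAbs.mpr hd2
          have := Int.ofNat_dvd.mp h'
          rwa [Int.natAbs_pow] at this
        have hcop : Nat.Coprime (r.den ^ (u ++ [x]).length) (r.num.natAbs ^ v.length) :=
          Nat.Coprime.pow _ _ r.reduced.symm
        have hdvd1 : k.den ∣ 1 := hcop.gcd_eq_one ▸ Nat.dvd_gcd hn1 hn2
        exact Nat.dvd_one.mp hdvd1
      -- claim 2: k is within the bound
      have hbound : |δ| ≤ B := by
        rw [hBdef, hδ, dval]
        have hzero : valBase r (((u ++ [x]).map fun x => (x.1 : ℚ) - (x.2 : ℚ)) ++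
            (v.map fun x => (x.1 : ℚ) - (x.2 : ℚ))) = 0 := by
          rw [← List.map_append]
          exact h0
        have hbnd : ∀ y ∈ ((u ++ [x]).map fun x => (x.1 : ℚ) - (x.2 : ℚ)) ++
            (v.map fun x => (x.1 : ℚ) - (x.2 : ℚ)), |y| ≤ M := by
          intro y hy
          rw [← List.map_append] at hy
          simp only [List.mem_map] at hy
          obtain ⟨z, _, rfl⟩ := hy
          exact hdig z
        exact valBase_prefix_bound r hr0 hrabs M hM0 _ _ hzero hbnd
      have hkabs : |k| ≤ (N : ℚ) := by
        rw [hkdef, abs_mul]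
        have hDabs : |(D : ℚ)| = (D : ℚ) := abs_of_pos (by positivity)
        rw [hDabs]
        calc |δ| * (D : ℚ) ≤ B * D := by gcongr
          _ ≤ (N : ℚ) := hBN
      have hmem : k.num ∈ Finset.Icc (-(N : ℤ)) (N : ℤ) := by
        rw [Finset.mem_Icc, ← abs_le]
        have : |((k.num : ℤ) : ℚ)| ≤ ((N : ℤ) : ℚ) := by
          rw [Rat.coe_int_num_of_den_eq_one hden1]
          push_cast
          exact hkabs
        exact_mod_cast this
      -- conclude: the automaton takes the step
      refine ⟨k.num, hmem, ?_⟩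
      rw [DFA.eval, DFA.evalFrom_append_singleton, ← DFA.eval, heval]
      have hkeq : ((n : ℚ) / D * r + ((x.1 : ℚ) - (x.2 : ℚ))) * D = k := by
        rw [hnval, hkdef, hδ, dval_append_singleton]
        field_simp
      show (eqDFA S r D N).step (some ⟨n, hn⟩) x = some ⟨k.num, hmem⟩
      simp only [eqDFA, Option.bind_some]
      have hc : (((n : ℚ) / D * r + ((x.1 : ℚ) - (x.2 : ℚ))) * D).den = 1 ∧
          (((n : ℚ) / D * r + ((x.1 : ℚ) - (x.2 : ℚ))) * D).num
            ∈ Finset.Icc (-(N : ℤ)) (N : ℤ) := by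
        rw [hkeq]; exact ⟨hden1, hmem⟩
      rw [dif_pos hc]
      refine congrArg some (Subtype.ext ?_)
      show (((n : ℚ) / D * r + ((x.1 : ℚ) - (x.2 : ℚ))) * D).num = k.num
      rw [hkeq]
  -- put everything together
  refine ⟨EqState N, inferInstance, eqDFA S r D N, ?_⟩
  ext w
  have hiff : (valBase r (w.map fun x => ((x.1 : ℚ))) =
      valBase r (w.map fun x => ((x.2 : ℚ)))) ↔ dval S r w = 0 := by
    rw [dval, valBase_map_sub, sub_eq_zero]
  constructor
  · intro hw
    have hw' : (eqDFA S r D N).eval w ∈ (eqDFA S r D N).accept := hw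
    have hw'' : (eqDFA S r D N).eval w = some ⟨0, zero_mem_Icc N⟩ := hw'
    have h0 : ((0 : ℤ) : ℚ) = dval S r w * D :=
      eqDFA_eval_eq S r D N hDQ w 0 (zero_mem_Icc N) hw''
    have hz : dval S r w * D = 0 := by exact_mod_cast h0.symm
    have hdw : dval S r w = 0 := by
      rcases mul_eq_zero.mp hz with h' | h'
      · exact h'
      · exact absurd h' hDQ
    exact hiff.mpr hdw
  · intro hw
    have hdw : dval S r w = 0 := hiff.mp hw
    obtain ⟨n, hn, heval⟩ := hG w [] (by simpa using hdw)
    have hnval : (n : ℚ) = dval S r w * D :=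
      eqDFA_eval_eq S r D N hDQ w n hn heval
    rw [hdw, zero_mul] at hnval
    have hn0 : n = 0 := by exact_mod_cast hnval
    subst hn0
    show (eqDFA S r D N).eval w ∈ (eqDFA S r D N).accept
    rw [heval]
    rfl
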